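/- Let A and B be Hermitian matrices in Matrix (Fin d) (Fin d) ℂ with A positive definite and A + B positive definite. Then log(A + B) − log A = ∫₀^∞ (t • 1 + A)⁻¹ * B * (t • 1 + A + B)⁻¹ dt, where 1 denotes the identity matrix and the integral is a Bochner integral of matrix-valued functions over (0, ∞). -/

import Mathlib

open Matrix
open scoped Classical ComplexOrder

variable {d : ℕ}

/-- Functional-calculus logarithm of a Hermitian matrix: for `A = U diag(λᵢ) U*` with `U`
unitary and `λᵢ` the (real) eigenvalues, `matLog A = U diag(ln λᵢ) U*`. (Junk value `0`
if `A` is not Hermitian.) -/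
noncomputable def matLog (A : Matrix (Fin d) (Fin d) ℂ) : Matrix (Fin d) (Fin d) ℂ :=
  if h : A.IsHermitian then
    (h.eigenvectorUnitary : Matrix (Fin d) (Fin d) ℂ) *
      Matrix.diagonal (fun i => (Real.log (h.eigenvalues i) : ℂ)) *
      star (h.eigenvectorUnitary : Matrix (Fin d) (Fin d) ℂ)
  else 0


attribute [local instance] Matrix.normedAddCommGroup Matrix.normedSpace

noncomputable instance matNormTopology : TopologicalSpace (Matrix (Fin d) (Fin d) ℂ) :=
  (Matrix.normedAddCommGroup : NormedAddCommGroup (Matrix (Fin d) (Fin d) ℂ)).toPseudoMetricSpace.toUniformSpace.toTopologicalSpace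

open MeasureTheory Set Filter


lemma scalar_integrable (c : ℝ) (hc : 0 < c) :
    IntegrableOn (fun t : ℝ => (1 + t)⁻¹ - (t + c)⁻¹) (Set.Ioi 0) := by
  have hcont : ContinuousOn (fun t : ℝ => (1 + t)⁻¹ - (t + c)⁻¹) (Set.Ici 0) := by
    refine ContinuousOn.sub (ContinuousOn.inv₀ (by fun_prop) ?_) (ContinuousOn.inv₀ (by fun_prop) ?_)
    · intro x hx; simp only [mem_Ici] at hx; positivity
    · intro x hx; simp only [mem_Ici] at hx; positivity
  have h1 : IntegrableOn (fun t : ℝ => (1 + t)⁻¹ - (t + c)⁻¹) (Set.Ioc 0 1) :=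
    (hcont.mono (Icc_subset_Ici_self)).integrableOn_Icc.mono_set Ioc_subset_Icc_self
  have h2 : IntegrableOn (fun t : ℝ => (1 + t)⁻¹ - (t + c)⁻¹) (Set.Ioi 1) := by
    have hbig : IntegrableOn (fun t : ℝ => (1 + |c - 1|) * t ^ (-2 : ℝ)) (Set.Ioi 1) :=
      (integrableOn_Ioi_rpow_of_lt (by norm_num) one_pos).const_mul _
    refine Integrable.mono hbig ((hcont.mono ?_).aestronglyMeasurable measurableSet_Ioi) ?_
    · exact fun x hx => mem_Ici.mpr (le_of_lt (lt_trans one_pos hx))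
    refine (ae_restrict_iff' measurableSet_Ioi).2 (Filter.Eventually.of_forall fun t ht => ?_)
    simp only [mem_Ioi] at ht
    have ht0 : (0:ℝ) < t := lt_trans one_pos ht
    have key : (1 + t)⁻¹ - (t + c)⁻¹ = (c - 1) * ((1+t)⁻¹ * (t+c)⁻¹) := by
      field_simp
      ring
    rw [key, Real.norm_eq_abs, Real.norm_eq_abs, abs_mul, abs_mul]
    have h1t : |(1+t)⁻¹| ≤ t⁻¹ := by
      rw [abs_inv, abs_of_pos (by linarith)]
      exact inv_anti₀ ht0 (by linarith)
    have h2t : |(t+c)⁻¹| ≤ t⁻¹ := by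
      rw [abs_inv, abs_of_pos (by linarith)]
      exact inv_anti₀ ht0 (by linarith)
    have : |(1+t)⁻¹| * |(t+c)⁻¹| ≤ t⁻¹ * t⁻¹ :=
      mul_le_mul h1t h2t (abs_nonneg _) (le_of_lt (inv_pos.2 ht0))
    calc |c - 1| * (|(1+t)⁻¹| * |(t+c)⁻¹|) ≤ |c-1| * (t⁻¹ * t⁻¹) := by
          exact mul_le_mul_of_nonneg_left this (abs_nonneg _)
      _ ≤ (1 + |c-1|) * t ^ (-2:ℝ) := by
          rw [Real.rpow_neg ht0.le, show ((2:ℝ)) = ((2:ℕ):ℝ) by norm_num, Real.rpow_natCast]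
          have : t⁻¹ * t⁻¹ = (t^2)⁻¹ := by rw [pow_two, mul_inv]
          rw [this]
          nlinarith [abs_nonneg (c-1), inv_nonneg.2 (sq_nonneg t)]
      _ ≤ |(1 + |c-1|) * t ^ (-2:ℝ)| := le_abs_self _
  have : Set.Ioi (0:ℝ) = Set.Ioc 0 1 ∪ Set.Ioi 1 := (Ioc_union_Ioi_eq_Ioi one_pos.le).symm
  rw [this]
  exact h1.union h2

lemma scalar_integral (c : ℝ) (hc : 0 < c) :
    ∫ t in Set.Ioi (0:ℝ), ((1 + t)⁻¹ - (t + c)⁻¹) = Real.log c := by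
  have hderiv : ∀ x ∈ Set.Ici (0:ℝ),
      HasDerivAt (fun t : ℝ => Real.log (1 + t) - Real.log (t + c))
        ((1 + x)⁻¹ - (x + c)⁻¹) x := by
    intro x hx
    simp only [mem_Ici] at hx
    have h1 : HasDerivAt (fun t : ℝ => Real.log (1 + t)) (1 + x)⁻¹ x := by
      have := (Real.hasDerivAt_log (by positivity : (1:ℝ) + x ≠ 0)).comp x
        ((hasDerivAt_id x).const_add 1)
      exact this.congr_deriv (mul_one _)
    have h2 : HasDerivAt (fun t : ℝ => Real.log (t + c)) (x + c)⁻¹ x := by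
      have := (Real.hasDerivAt_log (by positivity : x + c ≠ 0)).comp x
        ((hasDerivAt_id x).add_const c)
      exact this.congr_deriv (mul_one _)
    exact h1.sub h2
  have htend : Tendsto (fun t : ℝ => Real.log (1 + t) - Real.log (t + c)) atTop (nhds 0) := by
    have heq : ∀ᶠ t in atTop, Real.log (1 + t) - Real.log (t + c)
        = Real.log ((1 + t) / (t + c)) := by
      filter_upwards [eventually_gt_atTop (0:ℝ)] with t ht
      rw [Real.log_div (by positivity) (by positivity)]
    rw [Filter.tendsto_congr' heq]
    have : Tendsto (fun t : ℝ => (1 + t) / (t + c)) atTop (nhds 1) := by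
      have heq2 : ∀ᶠ t in atTop, (1 + t) / (t + c) = (t⁻¹ + 1) / (1 + c * t⁻¹) := by
        filter_upwards [eventually_gt_atTop (0:ℝ)] with t ht
        field_simp
      rw [Filter.tendsto_congr' heq2]
      have := (tendsto_inv_atTop_zero.add (tendsto_const_nhds (x := (1:ℝ)))).div
        ((tendsto_const_nhds (x := (1:ℝ))).add (tendsto_inv_atTop_zero.const_mul c)) (by norm_num)
      simp at this
      exact this
    have := this.log (by norm_num)
    simpa using this
  have := integral_Ioi_of_hasDerivAt_of_tendsto' hderiv (scalar_integrable c hc) htend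
  simp only [add_zero, zero_add, Real.log_one] at this
  rw [this]
  ring

lemma cscalar_integrable (c : ℝ) (hc : 0 < c) :
    IntegrableOn (fun t : ℝ => ((1 + t : ℝ) : ℂ)⁻¹ - ((t + c : ℝ) : ℂ)⁻¹) (Set.Ioi 0) := by
  have := (scalar_integrable c hc).ofReal (𝕜 := ℂ)
  refine this.congr (Filter.Eventually.of_forall fun t => ?_)
  push_cast
  norm_num

lemma cscalar_integral (c : ℝ) (hc : 0 < c) :
    ∫ t in Set.Ioi (0:ℝ), (((1 + t : ℝ) : ℂ)⁻¹ - ((t + c : ℝ) : ℂ)⁻¹)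
      = ((Real.log c : ℝ) : ℂ) := by
  calc ∫ t in Set.Ioi (0:ℝ), (((1 + t : ℝ) : ℂ)⁻¹ - ((t + c : ℝ) : ℂ)⁻¹)
      = ∫ t in Set.Ioi (0:ℝ), ((((1 + t)⁻¹ - (t + c)⁻¹ : ℝ)) : ℂ) := by
        refine setIntegral_congr_fun measurableSet_Ioi fun t ht => ?_
        push_cast
        norm_num
    _ = (((∫ t in Set.Ioi (0:ℝ), ((1 + t)⁻¹ - (t + c)⁻¹) : ℝ)) : ℂ) := integral_ofReal
    _ = ((Real.log c : ℝ) : ℂ) := by rw [scalar_integral c hc]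

lemma diagonal_eq_sum_std (v : Fin d → ℂ) :
    Matrix.diagonal v = ∑ i, Matrix.single i i (v i) := by
  ext a b
  simp only [Matrix.sum_apply, Matrix.single, Matrix.of_apply, Matrix.diagonal_apply]
  by_cases h : a = b
  · subst h
    rw [Finset.sum_eq_single a]
    · simp
    · intro i _ hi
      rw [if_neg]
      rintro ⟨rfl, -⟩
      exact hi rfl
    · simp
  · rw [if_neg h]
    symm
    refine Finset.sum_eq_zero fun i _ => ?_
    rw [if_neg]
    rintro ⟨rfl, rfl⟩
    exact h rfl

lemma real_smul_matrix (t : ℝ) (X : Matrix (Fin d) (Fin d) ℂ) :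
    t • X = ((t : ℂ)) • X := by
  ext i j
  simp [Matrix.smul_apply, Complex.real_smul]

lemma matLog_repr {M : Matrix (Fin d) (Fin d) ℂ} (hM : M.PosDef) :
    IntegrableOn (fun t : ℝ => ((1 + t : ℝ) : ℂ)⁻¹ • (1 : Matrix (Fin d) (Fin d) ℂ)
        - (t • (1 : Matrix (Fin d) (Fin d) ℂ) + M)⁻¹) (Set.Ioi 0)
    ∧ ∫ t in Set.Ioi (0:ℝ), (((1 + t : ℝ) : ℂ)⁻¹ • (1 : Matrix (Fin d) (Fin d) ℂ)
        - (t • (1 : Matrix (Fin d) (Fin d) ℂ) + M)⁻¹) = matLog M := by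
  have h : M.IsHermitian := hM.1
  set U : Matrix (Fin d) (Fin d) ℂ := (h.eigenvectorUnitary : Matrix (Fin d) (Fin d) ℂ) with hU
  have hU1 : U * star U = 1 := Matrix.mem_unitaryGroup_iff.mp h.eigenvectorUnitary.2
  have hU2 : star U * U = 1 := Matrix.mem_unitaryGroup_iff'.mp h.eigenvectorUnitary.2
  set lam : Fin d → ℝ := h.eigenvalues with hlam
  have hpos : ∀ i, 0 < lam i := hM.eigenvalues_pos
  set E : Fin d → Matrix (Fin d) (Fin d) ℂ :=
    fun i => U * Matrix.single i i 1 * star U with hE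
  set f : Fin d → ℝ → ℂ :=
    fun i t => ((1 + t : ℝ) : ℂ)⁻¹ - ((t + lam i : ℝ) : ℂ)⁻¹ with hf
  -- key conjugation identity
  have conj_diag : ∀ v : Fin d → ℂ,
      U * Matrix.diagonal v * star U = ∑ i, v i • E i := by
    intro v
    rw [diagonal_eq_sum_std, Finset.mul_sum, Finset.sum_mul]
    refine Finset.sum_congr rfl fun i _ => ?_
    have : Matrix.single i i (v i) = v i • Matrix.single i i 1 := by
      rw [Matrix.smul_single, smul_eq_mul, mul_one]
    rw [this, Matrix.mul_smul, Matrix.smul_mul]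
  have key : ∀ t ∈ Set.Ioi (0:ℝ),
      ((1 + t : ℝ) : ℂ)⁻¹ • (1 : Matrix (Fin d) (Fin d) ℂ)
        - (t • (1 : Matrix (Fin d) (Fin d) ℂ) + M)⁻¹ = ∑ i, f i t • E i := by
    intro t ht
    simp only [mem_Ioi] at ht
    have hsp : M = U * Matrix.diagonal (fun i => ((lam i : ℝ) : ℂ)) * star U := by
      have := h.spectral_theorem
      rw [Unitary.conjStarAlgAut_apply] at this
      exact this
    have hMt : t • (1 : Matrix (Fin d) (Fin d) ℂ) + M
        = U * Matrix.diagonal (fun i => ((t + lam i : ℝ) : ℂ)) * star U := by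
      have hd : Matrix.diagonal (fun i => ((t + lam i : ℝ) : ℂ))
          = ((t:ℂ)) • (1 : Matrix (Fin d) (Fin d) ℂ)
            + Matrix.diagonal (fun i => ((lam i : ℝ) : ℂ)) := by
        rw [Matrix.smul_one_eq_diagonal, Matrix.diagonal_add]
        congr 1
        funext i
        push_cast
        ring
      rw [hd, Matrix.mul_add, Matrix.add_mul, ← hsp]
      congr 1
      rw [mul_smul_comm, smul_mul_assoc, mul_one, hU1, real_smul_matrix]
    have hinv : (t • (1 : Matrix (Fin d) (Fin d) ℂ) + M)⁻¹
        = U * Matrix.diagonal (fun i => ((t + lam i : ℝ) : ℂ)⁻¹) * star U := by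
      rw [hMt]
      apply Matrix.inv_eq_right_inv
      have assoc : ∀ X Y : Matrix (Fin d) (Fin d) ℂ,
          (U * X * star U) * (U * Y * star U) = U * (X * (star U * U) * Y) * star U := by
        intro X Y
        noncomm_ring
      calc U * Matrix.diagonal (fun i => ((t + lam i : ℝ) : ℂ)) * star U
            * (U * Matrix.diagonal (fun i => ((t + lam i : ℝ) : ℂ)⁻¹) * star U)
          = U * (Matrix.diagonal (fun i => ((t + lam i : ℝ) : ℂ))
              * Matrix.diagonal (fun i => ((t + lam i : ℝ) : ℂ)⁻¹)) * star U := by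
            rw [assoc, hU2, mul_one]
      _ = 1 := by
            rw [Matrix.diagonal_mul_diagonal]
            have : (fun i => ((t + lam i : ℝ) : ℂ) * ((t + lam i : ℝ) : ℂ)⁻¹)
                = fun _ => (1:ℂ) := by
              funext i
              rw [mul_inv_cancel₀]
              exact_mod_cast (show ((t + lam i : ℝ)) ≠ 0 from ne_of_gt (by have := hpos i; linarith))
            rw [this, Matrix.diagonal_one, mul_one, hU1]
    have hone : ((1 + t : ℝ) : ℂ)⁻¹ • (1 : Matrix (Fin d) (Fin d) ℂ)
        = U * Matrix.diagonal (fun _ => ((1 + t : ℝ) : ℂ)⁻¹) * star U := by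
      rw [← Matrix.smul_one_eq_diagonal]
      rw [mul_smul_comm, smul_mul_assoc, mul_one, hU1]
    rw [hinv, hone, ← Matrix.sub_mul, ← Matrix.mul_sub, Matrix.diagonal_sub, conj_diag]
  -- integrability of the summand form
  have hint : ∀ i : Fin d, IntegrableOn (fun t : ℝ => f i t • E i) (Set.Ioi 0) :=
    fun i => (cscalar_integrable (lam i) (hpos i)).smul_const (E i)
  have hsumint : IntegrableOn (fun t : ℝ => ∑ i, f i t • E i) (Set.Ioi 0) :=
    integrable_finset_sum _ fun i _ => hint i
  have hinteg : IntegrableOn (fun t : ℝ => ((1 + t : ℝ) : ℂ)⁻¹ • (1 : Matrix (Fin d) (Fin d) ℂ)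
      - (t • (1 : Matrix (Fin d) (Fin d) ℂ) + M)⁻¹) (Set.Ioi 0) := by
    refine hsumint.congr ?_
    exact (ae_restrict_iff' measurableSet_Ioi).2
      (Filter.Eventually.of_forall fun t ht => (key t ht).symm)
  refine ⟨hinteg, ?_⟩
  rw [setIntegral_congr_fun measurableSet_Ioi (fun t ht => key t ht)]
  rw [integral_finset_sum _ fun i _ => hint i]
  have : ∀ i : Fin d, ∫ t in Set.Ioi (0:ℝ), f i t • E i
      = ((Real.log (lam i) : ℝ) : ℂ) • E i := by
    intro i
    rw [integral_smul_const, cscalar_integral (lam i) (hpos i)]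
  simp_rw [this]
  rw [matLog, dif_pos h, conj_diag]

lemma posdef_smul_one_add {t : ℝ} (ht : 0 < t) {M : Matrix (Fin d) (Fin d) ℂ}
    (hM : M.PosDef) : (t • (1 : Matrix (Fin d) (Fin d) ℂ) + M).PosDef := by
  have h1 : (t • (1 : Matrix (Fin d) (Fin d) ℂ)).PosDef := by
    rw [real_smul_matrix, Matrix.smul_one_eq_diagonal]
    exact Matrix.posDef_diagonal_iff.mpr fun i => by
      exact_mod_cast Complex.zero_lt_real.mpr ht
  exact h1.add hM

/-- Difference formula for operator logarithms: if `A` and `A + B` are positive definite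
Hermitian matrices, then `log(A+B) − log A = ∫₀^∞ (t•1+A)⁻¹ B (t•1+A+B)⁻¹ dt`
(Bochner integral over `(0,∞)`). -/
theorem matLog_add_sub_matLog (d : ℕ) (A B : Matrix (Fin d) (Fin d) ℂ)
    (hA : A.PosDef) (hB : B.IsHermitian) (hAB : (A + B).PosDef) :
    matLog (A + B) - matLog A
      = ∫ t in Set.Ioi (0 : ℝ),
          (t • (1 : Matrix (Fin d) (Fin d) ℂ) + A)⁻¹ * B
            * (t • (1 : Matrix (Fin d) (Fin d) ℂ) + A + B)⁻¹ := by
  obtain ⟨hiA, heA⟩ := matLog_repr hA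
  obtain ⟨hiAB, heAB⟩ := matLog_repr hAB
  rw [← heAB, ← heA, ← integral_sub hiAB hiA]
  refine setIntegral_congr_fun measurableSet_Ioi fun t ht => ?_
  simp only [mem_Ioi] at ht
  have hP : (t • (1 : Matrix (Fin d) (Fin d) ℂ) + A).PosDef := posdef_smul_one_add ht hA
  have hQ : (t • (1 : Matrix (Fin d) (Fin d) ℂ) + A + B).PosDef := by
    rw [add_assoc]
    exact posdef_smul_one_add ht hAB
  set P := t • (1 : Matrix (Fin d) (Fin d) ℂ) + A with hPdef
  set Q := t • (1 : Matrix (Fin d) (Fin d) ℂ) + A + B with hQdef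
  have hdP : IsUnit P.det := hP.det_pos.ne'.isUnit
  have hdQ : IsUnit Q.det := hQ.det_pos.ne'.isUnit
  have hQA : t • (1 : Matrix (Fin d) (Fin d) ℂ) + (A + B) = Q := by rw [hQdef, add_assoc]
  rw [hQA]
  have hBQP : B = Q - P := by rw [hQdef, hPdef]; abel
  calc ((1 + t : ℝ) : ℂ)⁻¹ • (1 : Matrix (Fin d) (Fin d) ℂ) - Q⁻¹
        - (((1 + t : ℝ) : ℂ)⁻¹ • (1 : Matrix (Fin d) (Fin d) ℂ) - P⁻¹)
      = P⁻¹ - Q⁻¹ := by abel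
    _ = P⁻¹ * B * Q⁻¹ := by
        rw [hBQP, Matrix.mul_sub, Matrix.sub_mul, mul_assoc,
          Matrix.mul_nonsing_inv Q hdQ, Matrix.nonsing_inv_mul P hdP, mul_one, one_mul]
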